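/- arXiv:2411.18236 — 2 statements merged into one kernel-verified Lean document; each statement's English description precedes it below -/
import Mathlib

section
/- Let h : D([0,1],ℝ) × C₀↑([0,1],ℝ) → D([0,1],ℝ) be defined by h(x,y) = x/y, where C₀↑([0,1],ℝ) is the set of continuous nondecreasing functions y on [0,1] with y(0) > 0. Then h is continuous when the domain carries the product (weak M₁) topology and the codomain carries the M₁ topology. -/
open Set Filter
open Topology

/-- A real-valued càdlàg function on `[0,1]` (values outside `[0,1]` are irrelevant):
right-continuous on `[0,1)` and with finite left limits on `(0,1]`. -/
structure Cadlag where
  toFun : ℝ → ℝ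
  rightCont : ∀ t ∈ Set.Ico (0:ℝ) 1, ContinuousWithinAt toFun (Set.Ici t) t
  leftLimEx : ∀ t ∈ Set.Ioc (0:ℝ) 1, ∃ L : ℝ,
    Tendsto toFun (nhdsWithin t (Set.Iio t)) (nhds L)

/-- The left limit `x(t-)`, with the convention `x(0-) = x(0)`. -/
noncomputable def Cadlag.llim (x : Cadlag) (t : ℝ) : ℝ :=
  if t = 0 then x.toFun 0 else Function.leftLim x.toFun t

/-- The completed (thin) graph `Γ_x` of `x`. -/
def Cadlag.graph (x : Cadlag) : Set (ℝ × ℝ) :=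
  {p | p.1 ∈ Set.Icc (0:ℝ) 1 ∧ p.2 ∈ segment ℝ (x.llim p.1) (x.toFun p.1)}

/-- `(r, u)` is a (strong) parametric representation of the completed graph of `x`:
a continuous map on `[0,1]`, with nondecreasing time component, mapping `[0,1]`
onto `Γ_x`. -/
def IsParamRep (x : Cadlag) (r u : ℝ → ℝ) : Prop :=
  ContinuousOn r (Set.Icc 0 1) ∧ ContinuousOn u (Set.Icc 0 1) ∧
    MonotoneOn r (Set.Icc 0 1) ∧
    (fun s => (r s, u s)) '' Set.Icc (0:ℝ) 1 = x.graph

/-- The Skorokhod `M₁` distance on `D([0,1],ℝ)`. -/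
noncomputable def dM1 (x y : Cadlag) : ℝ :=
  sInf {d : ℝ | ∃ r₁ u₁ r₂ u₂ : ℝ → ℝ, IsParamRep x r₁ u₁ ∧ IsParamRep y r₂ u₂ ∧
    d = ⨆ s : Set.Icc (0:ℝ) 1, max |r₁ s - r₂ s| |u₁ s - u₂ s|}

/-- The uniform distance on `D([0,1],ℝ)`. -/
noncomputable def unifDist (x y : Cadlag) : ℝ :=
  ⨆ t : Set.Icc (0:ℝ) 1, |x.toFun t - y.toFun t|

/-- Membership in `C₀↑([0,1],ℝ)`: continuous, nondecreasing, strictly positive at `0`. -/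
def InC0up (y : Cadlag) : Prop :=
  ContinuousOn y.toFun (Set.Icc 0 1) ∧ MonotoneOn y.toFun (Set.Icc 0 1) ∧ 0 < y.toFun 0

/-- `q` is the pointwise quotient `x / y` on `[0,1]`. -/
def IsQuot (x y q : Cadlag) : Prop :=
  ∀ t ∈ Set.Icc (0:ℝ) 1, q.toFun t = x.toFun t / y.toFun t

lemma mem_segment_div_iff {a b c v : ℝ} (hc : 0 < c) :
    v ∈ segment ℝ (a / c) (b / c) ↔ v * c ∈ segment ℝ a b := by
  constructor
  · rintro ⟨p, q, hp, hq, hpq, rfl⟩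
    exact ⟨p, q, hp, hq, hpq, by simp only [smul_eq_mul]; have hc' : c ≠ 0 := ne_of_gt hc; rw [add_mul, mul_assoc, mul_assoc, div_mul_cancel₀ _ hc', div_mul_cancel₀ _ hc']⟩
  · rintro ⟨p, q, hp, hq, hpq, h⟩
    refine ⟨p, q, hp, hq, hpq, ?_⟩
    have hc' : c ≠ 0 := ne_of_gt hc
    field_simp
    simp only [smul_eq_mul] at h ⊢; field_simp; linarith [h]

lemma tendsto_left_of_contOn {f : ℝ → ℝ} (hf : ContinuousOn f (Icc 0 1)) {t : ℝ}
    (ht : t ∈ Ioc (0:ℝ) 1) : Tendsto f (𝓝[<] t) (𝓝 (f t)) := by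
  have h1 : 𝓝[Ioo (0:ℝ) t] t = 𝓝[<] t := nhdsWithin_Ioo_eq_nhdsLT ht.1
  have h2 : 𝓝[Ioo (0:ℝ) t] t ≤ 𝓝[Icc (0:ℝ) 1] t :=
    nhdsWithin_mono t (fun s hs => ⟨le_of_lt hs.1, le_trans (le_of_lt hs.2) ht.2⟩)
  have h3 : ContinuousWithinAt f (Icc 0 1) t := hf t ⟨le_of_lt ht.1, ht.2⟩
  exact (h3.tendsto).mono_left (h1 ▸ h2)

lemma Ioo_mem_left {t : ℝ} (ht : 0 < t) : Ioo (0:ℝ) t ∈ 𝓝[<] t := by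
  rw [← nhdsWithin_Ioo_eq_nhdsLT ht]
  exact self_mem_nhdsWithin


lemma y_pos {y : Cadlag} (hy : InC0up y) {t : ℝ} (ht : t ∈ Icc (0:ℝ) 1) :
    y.toFun 0 ≤ y.toFun t :=
  hy.2.1 (left_mem_Icc.2 zero_le_one) ht ht.1

lemma y_pos' {y : Cadlag} (hy : InC0up y) {t : ℝ} (ht : t ∈ Icc (0:ℝ) 1) :
    0 < y.toFun t := lt_of_lt_of_le hy.2.2 (y_pos hy ht)

lemma llim_div {x y q : Cadlag} (hy : InC0up y) (hq : IsQuot x y q) {t : ℝ}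
    (ht : t ∈ Icc (0:ℝ) 1) : q.llim t = x.llim t / y.toFun t := by
  rcases eq_or_lt_of_le ht.1 with h0 | h0
  · simp only [Cadlag.llim, ← h0, if_pos rfl]
    exact hq 0 (left_mem_Icc.2 zero_le_one)
  · have htI : t ∈ Ioc (0:ℝ) 1 := ⟨h0, ht.2⟩
    obtain ⟨L, hL⟩ := x.leftLimEx t htI
    have hne : (𝓝[<] t) ≠ ⊥ := (nhdsLT_neBot t).ne
    have hyL : Tendsto y.toFun (𝓝[<] t) (𝓝 (y.toFun t)) := tendsto_left_of_contOn hy.1 htI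
    have hqt : Tendsto q.toFun (𝓝[<] t) (𝓝 (L / y.toFun t)) := by
      have hd : Tendsto (fun s => x.toFun s / y.toFun s) (𝓝[<] t) (𝓝 (L / y.toFun t)) :=
        hL.div hyL (ne_of_gt (y_pos' hy ht))
      refine hd.congr' ?_
      filter_upwards [Ioo_mem_left h0] with s hs
      exact (hq s ⟨le_of_lt hs.1, le_trans (le_of_lt hs.2) ht.2⟩).symm
    have h1 : q.llim t = L / y.toFun t := by
      simp only [Cadlag.llim, if_neg (ne_of_gt h0)]
      exact leftLim_eq_of_tendsto hqt
    have h2 : x.llim t = L := by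
      simp only [Cadlag.llim, if_neg (ne_of_gt h0)]
      exact leftLim_eq_of_tendsto hL
    rw [h1, h2]

lemma graph_mem_iff {x y q : Cadlag} (hy : InC0up y) (hq : IsQuot x y q) (p : ℝ × ℝ) :
    p ∈ q.graph ↔ (p.1, p.2 * y.toFun p.1) ∈ x.graph := by
  constructor
  · rintro ⟨h1, h2⟩
    refine ⟨h1, ?_⟩
    rw [llim_div hy hq h1, hq p.1 h1] at h2
    exact (mem_segment_div_iff (y_pos' hy h1)).1 h2
  · rintro ⟨h1, h2⟩
    refine ⟨h1, ?_⟩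
    rw [llim_div hy hq h1, hq p.1 h1]
    exact (mem_segment_div_iff (y_pos' hy h1)).2 h2

lemma graph_div_eq {x y q : Cadlag} (hy : InC0up y) (hq : IsQuot x y q) :
    q.graph = (fun p : ℝ × ℝ => (p.1, p.2 / y.toFun p.1)) '' x.graph := by
  ext p
  constructor
  · intro hp
    refine ⟨(p.1, p.2 * y.toFun p.1), (graph_mem_iff hy hq p).1 hp, ?_⟩
    have h := ne_of_gt (y_pos' hy hp.1)
    obtain ⟨t, v⟩ := p
    simp only [Prod.mk.injEq]
    exact ⟨trivial, by field_simp⟩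
  · rintro ⟨⟨t, v⟩, hv, rfl⟩
    have ht := hv.1
    refine (graph_mem_iff hy hq _).2 ?_
    have hyt := ne_of_gt (y_pos' hy ht)
    simpa [div_mul_cancel₀ v hyt] using hv

lemma graph_mul_eq {x y q : Cadlag} (hy : InC0up y) (hq : IsQuot x y q) :
    x.graph = (fun p : ℝ × ℝ => (p.1, p.2 * y.toFun p.1)) '' q.graph := by
  ext p
  constructor
  · intro hp
    refine ⟨(p.1, p.2 / y.toFun p.1), ?_, ?_⟩
    · refine (graph_mem_iff hy hq _).2 ?_
      have hyt := ne_of_gt (y_pos' hy hp.1)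
      simpa [div_mul_cancel₀ p.2 hyt] using hp
    · have h := ne_of_gt (y_pos' hy hp.1)
      show (p.1, p.2 / y.toFun p.1 * y.toFun p.1) = p
      obtain ⟨t, v⟩ := p
      simp only [Prod.mk.injEq]
      exact ⟨trivial, by field_simp⟩
  · rintro ⟨⟨t, v⟩, hv, rfl⟩
    exact (graph_mem_iff hy hq _).1 hv

lemma rep_mem {x : Cadlag} {r u : ℝ → ℝ} (h : IsParamRep x r u) {s : ℝ}
    (hs : s ∈ Icc (0:ℝ) 1) : (r s, u s) ∈ x.graph := by
  rw [← h.2.2.2]; exact mem_image_of_mem _ hs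

lemma rep_mapsTo {x : Cadlag} {r u : ℝ → ℝ} (h : IsParamRep x r u) :
    MapsTo r (Icc (0:ℝ) 1) (Icc (0:ℝ) 1) := fun s hs => (rep_mem h hs).1

lemma rep_div {x y q : Cadlag} (hy : InC0up y) (hq : IsQuot x y q) {r u : ℝ → ℝ}
    (h : IsParamRep x r u) : IsParamRep q r (fun s => u s / y.toFun (r s)) := by
  obtain ⟨hr, hu, hm, him⟩ := h
  have hyr : ContinuousOn (fun s => y.toFun (r s)) (Icc 0 1) :=
    hy.1.comp hr (rep_mapsTo ⟨hr, hu, hm, him⟩)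
  refine ⟨hr, hu.div hyr (fun s hs => ne_of_gt (y_pos' hy (rep_mapsTo ⟨hr, hu, hm, him⟩ hs))),
    hm, ?_⟩
  have : (fun s => (r s, u s / y.toFun (r s))) =
      (fun p : ℝ × ℝ => (p.1, p.2 / y.toFun p.1)) ∘ (fun s => (r s, u s)) := rfl
  rw [this, image_comp, him, ← graph_div_eq hy hq]

lemma rep_mul {x y q : Cadlag} (hy : InC0up y) (hq : IsQuot x y q) {r u : ℝ → ℝ}
    (h : IsParamRep q r u) : IsParamRep x r (fun s => u s * y.toFun (r s)) := by
  obtain ⟨hr, hu, hm, him⟩ := h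
  have hyr : ContinuousOn (fun s => y.toFun (r s)) (Icc 0 1) :=
    hy.1.comp hr (rep_mapsTo ⟨hr, hu, hm, him⟩)
  refine ⟨hr, hu.mul hyr, hm, ?_⟩
  have : (fun s => (r s, u s * y.toFun (r s))) =
      (fun p : ℝ × ℝ => (p.1, p.2 * y.toFun p.1)) ∘ (fun s => (r s, u s)) := rfl
  rw [this, image_comp, him, ← graph_mul_eq hy hq]

lemma llim_of_cont {y : Cadlag} (hyc : ContinuousOn y.toFun (Icc 0 1)) {t : ℝ}
    (ht : t ∈ Icc (0:ℝ) 1) : y.llim t = y.toFun t := by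
  rcases eq_or_lt_of_le ht.1 with h0 | h0
  · simp [Cadlag.llim, ← h0]
  · simp only [Cadlag.llim, if_neg (ne_of_gt h0)]
    exact leftLim_eq_of_tendsto
      (tendsto_left_of_contOn hyc ⟨h0, ht.2⟩)

lemma graph_of_cont {y : Cadlag} (hyc : ContinuousOn y.toFun (Icc 0 1)) :
    y.graph = (fun t => (t, y.toFun t)) '' Icc (0:ℝ) 1 := by
  ext ⟨t, v⟩
  constructor
  · rintro ⟨h1, h2⟩
    rw [llim_of_cont hyc h1, segment_same] at h2
    exact ⟨t, h1, by simp [h2.symm]⟩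
  · rintro ⟨s, hs, h⟩
    obtain ⟨rfl, rfl⟩ : s = t ∧ y.toFun s = v := by simpa [Prod.ext_iff] using h
    exact ⟨hs, by rw [llim_of_cont hyc hs, segment_same]; rfl⟩

lemma graph_snd_of_cont {y : Cadlag} (hyc : ContinuousOn y.toFun (Icc 0 1)) {t v : ℝ}
    (h : (t, v) ∈ y.graph) : v = y.toFun t := by
  rw [graph_of_cont hyc] at h
  obtain ⟨s, _, hs⟩ := h
  obtain ⟨rfl, rfl⟩ : s = t ∧ y.toFun s = v := by simpa [Prod.ext_iff] using hs
  rfl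

lemma rep_id {y : Cadlag} (hyc : ContinuousOn y.toFun (Icc 0 1)) :
    IsParamRep y (fun t => t) y.toFun := by
  refine ⟨continuousOn_id, hyc, fun a _ b _ hab => hab, ?_⟩
  rw [graph_of_cont hyc]

lemma abs_sub_le_abs_add_abs (a b : ℝ) : |a - b| ≤ |a| + |b| := by
  have := abs_add_le a (-b); simpa [sub_eq_add_neg] using this

lemma sup_pt {r1 u1 r2 u2 : ℝ → ℝ} (h1 : ContinuousOn r1 (Icc 0 1))
    (h2 : ContinuousOn u1 (Icc 0 1)) (h3 : ContinuousOn r2 (Icc 0 1))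
    (h4 : ContinuousOn u2 (Icc 0 1)) (s : Icc (0:ℝ) 1) :
    max |r1 s - r2 s| |u1 s - u2 s| ≤
      ⨆ t : Icc (0:ℝ) 1, max |r1 t - r2 t| |u1 t - u2 t| := by
  obtain ⟨C1, hC1⟩ := isCompact_Icc.exists_bound_of_continuousOn h1
  obtain ⟨C2, hC2⟩ := isCompact_Icc.exists_bound_of_continuousOn h2
  obtain ⟨C3, hC3⟩ := isCompact_Icc.exists_bound_of_continuousOn h3
  obtain ⟨C4, hC4⟩ := isCompact_Icc.exists_bound_of_continuousOn h4
  refine le_ciSup (f := fun t : Icc (0:ℝ) 1 => max |r1 t - r2 t| |u1 t - u2 t|) ⟨max (C1 + C3) (C2 + C4), ?_⟩ s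
  rintro v ⟨t, rfl⟩
  refine max_le_max ?_ ?_
  · refine (abs_sub_le_abs_add_abs _ _).trans (add_le_add ?_ ?_)
    · simpa [Real.norm_eq_abs] using hC1 t t.2
    · simpa [Real.norm_eq_abs] using hC3 t t.2
  · refine (abs_sub_le_abs_add_abs _ _).trans (add_le_add ?_ ?_)
    · simpa [Real.norm_eq_abs] using hC2 t t.2
    · simpa [Real.norm_eq_abs] using hC4 t t.2

lemma dM1_bddBelow (x y : Cadlag) : BddBelow {d : ℝ | ∃ r₁ u₁ r₂ u₂ : ℝ → ℝ,
    IsParamRep x r₁ u₁ ∧ IsParamRep y r₂ u₂ ∧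
    d = ⨆ s : Set.Icc (0:ℝ) 1, max |r₁ s - r₂ s| |u₁ s - u₂ s|} := by
  refine ⟨0, ?_⟩
  rintro d ⟨r1, u1, r2, u2, _, _, rfl⟩
  exact Real.iSup_nonneg (fun s => le_trans (abs_nonneg _) (le_max_left _ _))

lemma quot_est {a c b d : ℝ} (hb : 0 < b) (hd : 0 < d) :
    |a / b - c / d| ≤ |a - c| / b + |c| * |d - b| / (b * d) := by
  have h : a / b - c / d = (a - c) / b + c * (d - b) / (b * d) := by
    field_simp; ring
  rw [h]
  refine (abs_add_le _ _).trans ?_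
  rw [abs_div, abs_div, abs_mul, abs_of_pos hb, abs_mul, abs_of_pos hb, abs_of_pos hd]

/-- Lemma 2.1: the division map `h(x,y) = x / y` from
`D([0,1],ℝ) × C₀↑([0,1],ℝ)` (with the product of `M₁` metrics, i.e. the weak `M₁`
topology) to `D([0,1],ℝ)` with the `M₁` metric is continuous. -/
theorem stmt11 (x y q : Cadlag) (hy : InC0up y) (hq : IsQuot x y q) :
    ∀ ε > (0:ℝ), ∃ δ > (0:ℝ), ∀ x' y' q' : Cadlag, InC0up y' → IsQuot x' y' q' →
      max (dM1 x x') (dM1 y y') < δ → dM1 q q' < ε := by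
  intro ε hε
  have hc0 : 0 < y.toFun 0 := hy.2.2
  set c0 := y.toFun 0 with hc0def
  by_cases hbd : ∃ M, 0 ≤ M ∧ ∀ p ∈ x.graph, |p.2| ≤ M
  swap
  · refine ⟨1, one_pos, ?_⟩
    intro x' y' q' hy' hq' _
    by_cases hSq : {d : ℝ | ∃ r₁ u₁ r₂ u₂ : ℝ → ℝ, IsParamRep q r₁ u₁ ∧ IsParamRep q' r₂ u₂ ∧
        d = ⨆ s : Set.Icc (0:ℝ) 1, max |r₁ s - r₂ s| |u₁ s - u₂ s|}.Nonempty
    · exfalso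
      obtain ⟨d, R1, U1, R2, U2, hQ1, -, -⟩ := hSq
      have hx : IsParamRep x R1 (fun s => U1 s * y.toFun (R1 s)) := rep_mul hy hq hQ1
      obtain ⟨C, hC⟩ := isCompact_Icc.exists_bound_of_continuousOn hx.2.1
      refine hbd ⟨max C 0, le_max_right _ _, ?_⟩
      rintro p hp
      rw [← hx.2.2.2] at hp
      obtain ⟨s, hs, rfl⟩ := hp
      exact le_max_of_le_left (by simpa [Real.norm_eq_abs, abs_mul] using hC s hs)
    · show sInf _ < ε
      rw [Set.not_nonempty_iff_eq_empty.1 hSq, Real.sInf_empty]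
      exact hε
  · obtain ⟨M, hM0, hM⟩ := hbd
    set β := min (min (c0 / 4) 1) (ε * c0 ^ 2 / (32 * (M + 1))) with hβdef
    have hβ : 0 < β := lt_min (lt_min (by positivity) one_pos) (by positivity)
    have huc := isCompact_Icc.uniformContinuousOn_of_continuous hy.1
    rw [Metric.uniformContinuousOn_iff] at huc
    obtain ⟨δu, hδupos, hucy⟩ := huc β hβ
    set δ := min (min δu β) (min (c0 * ε / 4) (ε / 2)) with hδdef
    have hδpos : 0 < δ := lt_min (lt_min hδupos hβ) (lt_min (by positivity) (by positivity))
    refine ⟨δ, hδpos, ?_⟩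
    intro x' y' q' hy' hq' hlt
    have hxx' : dM1 x x' < δ := lt_of_le_of_lt (le_max_left _ _) hlt
    have hyy' : dM1 y y' < δ := lt_of_le_of_lt (le_max_right _ _) hlt
    by_cases hSq : {d : ℝ | ∃ r₁ u₁ r₂ u₂ : ℝ → ℝ, IsParamRep q r₁ u₁ ∧ IsParamRep q' r₂ u₂ ∧
        d = ⨆ s : Set.Icc (0:ℝ) 1, max |r₁ s - r₂ s| |u₁ s - u₂ s|}.Nonempty
    swap
    · show sInf _ < ε
      rw [Set.not_nonempty_iff_eq_empty.1 hSq, Real.sInf_empty]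
      exact hε
    · obtain ⟨d0, R1, U1, R2, U2, hQ1, hQ2, -⟩ := hSq
      have hx1 : IsParamRep x R1 (fun s => U1 s * y.toFun (R1 s)) := rep_mul hy hq hQ1
      have hx2 : IsParamRep x' R2 (fun s => U2 s * y'.toFun (R2 s)) := rep_mul hy' hq' hQ2
      -- close representations of x and x'
      have hSxne : {d : ℝ | ∃ r₁ u₁ r₂ u₂ : ℝ → ℝ, IsParamRep x r₁ u₁ ∧ IsParamRep x' r₂ u₂ ∧
          d = ⨆ s : Set.Icc (0:ℝ) 1, max |r₁ s - r₂ s| |u₁ s - u₂ s|}.Nonempty :=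
        ⟨_, _, _, _, _, hx1, hx2, rfl⟩
      obtain ⟨dx, ⟨r1, u1, r2, u2, hrep1, hrep2, rfl⟩, hdx⟩ :=
        exists_lt_of_csInf_lt hSxne hxx'
      -- close representations of y and y'
      have hSyne : {d : ℝ | ∃ r₁ u₁ r₂ u₂ : ℝ → ℝ, IsParamRep y r₁ u₁ ∧ IsParamRep y' r₂ u₂ ∧
          d = ⨆ s : Set.Icc (0:ℝ) 1, max |r₁ s - r₂ s| |u₁ s - u₂ s|}.Nonempty :=
        ⟨_, _, _, _, _, rep_id hy.1, rep_id hy'.1, rfl⟩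
      obtain ⟨dy, ⟨ρ1, v1, ρ2, v2, hrepy, hrepy', rfl⟩, hdy⟩ :=
        exists_lt_of_csInf_lt hSyne hyy'
      have hδu' : δ ≤ δu := le_trans (min_le_left _ _) (min_le_left _ _)
      have hδβ : δ ≤ β := le_trans (min_le_left _ _) (min_le_right _ _)
      have hβc0 : β ≤ c0 / 4 := le_trans (min_le_left _ _) (min_le_left _ _)
      have hβ1 : β ≤ 1 := le_trans (min_le_left _ _) (min_le_right _ _)
      have hβε : β * (32 * (M + 1)) ≤ ε * c0 ^ 2 :=
        (le_div_iff₀ (by positivity)).1 (min_le_right _ _)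
      have hδε4 : δ ≤ c0 * ε / 4 := le_trans (min_le_right _ _) (min_le_left _ _)
      have hδε2 : δ ≤ ε / 2 := le_trans (min_le_right _ _) (min_le_right _ _)
      -- uniform closeness of y' and y
      have hη : ∀ t ∈ Icc (0:ℝ) 1, |y'.toFun t - y.toFun t| ≤ δ + β := by
        intro t ht
        have hmem : (t, y'.toFun t) ∈ y'.graph := by
          rw [graph_of_cont hy'.1]; exact ⟨t, ht, rfl⟩
        rw [← hrepy'.2.2.2] at hmem
        obtain ⟨s, hs, hseq⟩ := hmem
        obtain ⟨h1, h2⟩ : ρ2 s = t ∧ v2 s = y'.toFun t := by simpa [Prod.ext_iff] using hseq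
        have hv1 : v1 s = y.toFun (ρ1 s) := graph_snd_of_cont hy.1 (rep_mem hrepy hs)
        have hps := sup_pt hrepy.1 hrepy.2.1 hrepy'.1 hrepy'.2.1 ⟨s, hs⟩
        have hρ : |ρ1 s - ρ2 s| < δ := lt_of_le_of_lt ((le_max_left _ _).trans hps) hdy
        have hv : |v1 s - v2 s| < δ := lt_of_le_of_lt ((le_max_right _ _).trans hps) hdy
        have hρ1mem : ρ1 s ∈ Icc (0:ℝ) 1 := rep_mapsTo hrepy hs
        have hyy : |y.toFun (ρ1 s) - y.toFun t| < β := by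
          have hd : dist (ρ1 s) t < δu := by
            rw [Real.dist_eq, ← h1]; exact lt_of_lt_of_le hρ hδu'
          simpa [Real.dist_eq] using hucy _ hρ1mem _ ht hd
        calc |y'.toFun t - y.toFun t|
            ≤ |y'.toFun t - v1 s| + |v1 s - y.toFun t| := abs_sub_le _ _ _
          _ ≤ δ + β := by
              have e1 : |y'.toFun t - v1 s| = |v1 s - v2 s| := by rw [← h2, abs_sub_comm]
              have e2 : |v1 s - y.toFun t| = |y.toFun (ρ1 s) - y.toFun t| := by rw [hv1]
              rw [e1, e2]
              exact add_le_add hv.le hyy.le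
      -- the representations of q and q'
      have hQr1 : IsParamRep q r1 (fun s => u1 s / y.toFun (r1 s)) := rep_div hy hq hrep1
      have hQr2 : IsParamRep q' r2 (fun s => u2 s / y'.toFun (r2 s)) := rep_div hy' hq' hrep2
      have hkey : ∀ s : Icc (0:ℝ) 1,
          max |r1 s - r2 s| |u1 s / y.toFun (r1 s) - u2 s / y'.toFun (r2 s)| ≤ ε / 2 := by
        intro s
        have hs := s.2
        have ht1 : r1 s ∈ Icc (0:ℝ) 1 := rep_mapsTo hrep1 hs
        have ht2 : r2 s ∈ Icc (0:ℝ) 1 := rep_mapsTo hrep2 hs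
        have hb : c0 ≤ y.toFun (r1 s) := y_pos hy ht1
        have hbpos : 0 < y.toFun (r1 s) := y_pos' hy ht1
        have hyd : |y'.toFun (r2 s) - y.toFun (r2 s)| ≤ δ + β := hη _ ht2
        have hc0y2 : c0 ≤ y.toFun (r2 s) := y_pos hy ht2
        have hdge : c0 / 2 ≤ y'.toFun (r2 s) := by
          have h' := abs_le.1 hyd
          have : y.toFun (r2 s) - (δ + β) ≤ y'.toFun (r2 s) := by linarith [h'.1]
          linarith
        have hd2pos : 0 < y'.toFun (r2 s) := lt_of_lt_of_le (by linarith) hdge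
        have hps := sup_pt hrep1.1 hrep1.2.1 hrep2.1 hrep2.2.1 s
        have hr12 : |r1 s - r2 s| < δ := lt_of_le_of_lt ((le_max_left _ _).trans hps) hdx
        have hu12 : |u1 s - u2 s| < δ := lt_of_le_of_lt ((le_max_right _ _).trans hps) hdx
        have hu1M : |u1 s| ≤ M := hM _ (rep_mem hrep1 hs)
        have hu2M : |u2 s| ≤ M + 1 := by
          have h1 : |u2 s| ≤ |u1 s| + |u1 s - u2 s| := by
            have := abs_sub_le_abs_add_abs (u1 s) (u1 s - u2 s)
            simpa using this
          linarith
        have hyc12 : |y.toFun (r1 s) - y.toFun (r2 s)| < β := by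
          have hd : dist (r1 s) (r2 s) < δu := by
            rw [Real.dist_eq]; exact lt_of_lt_of_le hr12 hδu'
          simpa [Real.dist_eq] using hucy _ ht1 _ ht2 hd
        have hbd' : |y'.toFun (r2 s) - y.toFun (r1 s)| ≤ δ + 2 * β := by
          calc |y'.toFun (r2 s) - y.toFun (r1 s)|
              ≤ |y'.toFun (r2 s) - y.toFun (r2 s)| + |y.toFun (r2 s) - y.toFun (r1 s)| :=
                abs_sub_le _ _ _
            _ ≤ δ + 2 * β := by
                rw [abs_sub_comm (y.toFun (r2 s))]
                linarith
        have hquot := quot_est (a := u1 s) (c := u2 s) hbpos hd2pos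
        have term1 : |u1 s - u2 s| / y.toFun (r1 s) ≤ ε / 4 := by
          have h1 : |u1 s - u2 s| / y.toFun (r1 s) ≤ δ / c0 :=
            div_le_div₀ (le_of_lt hδpos) (le_of_lt hu12) hc0 hb
          have h2 : δ / c0 ≤ ε / 4 := by
            rw [div_le_iff₀ hc0]; linarith
          linarith
        have term2 : |u2 s| * |y'.toFun (r2 s) - y.toFun (r1 s)| /
            (y.toFun (r1 s) * y'.toFun (r2 s)) ≤ ε / 4 := by
          have hnum : |u2 s| * |y'.toFun (r2 s) - y.toFun (r1 s)| ≤ (M + 1) * (δ + 2 * β) :=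
            mul_le_mul hu2M hbd' (abs_nonneg _) (by linarith)
          have hden : c0 * (c0 / 2) ≤ y.toFun (r1 s) * y'.toFun (r2 s) :=
            mul_le_mul hb hdge (by linarith) (le_of_lt hbpos)
          have h1 : |u2 s| * |y'.toFun (r2 s) - y.toFun (r1 s)| /
              (y.toFun (r1 s) * y'.toFun (r2 s)) ≤ (M + 1) * (δ + 2 * β) / (c0 * (c0 / 2)) :=
            div_le_div₀ (by positivity) hnum (by positivity) hden
          have h2 : (M + 1) * (δ + 2 * β) / (c0 * (c0 / 2)) ≤ ε / 4 := by
            rw [div_le_iff₀ (by positivity)]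
            nlinarith [hβε, hδβ, hβ, hM0, hε, hc0]
          linarith
        refine max_le (le_of_lt (lt_of_lt_of_le hr12 hδε2)) ?_
        calc |u1 s / y.toFun (r1 s) - u2 s / y'.toFun (r2 s)|
            ≤ |u1 s - u2 s| / y.toFun (r1 s) + |u2 s| * |y'.toFun (r2 s) - y.toFun (r1 s)| /
              (y.toFun (r1 s) * y'.toFun (r2 s)) := hquot
          _ ≤ ε / 2 := by linarith
      haveI : Nonempty (Icc (0:ℝ) 1) := ⟨⟨0, by norm_num⟩⟩
      have hmem : (⨆ s : Set.Icc (0:ℝ) 1,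
          max |r1 s - r2 s| |u1 s / y.toFun (r1 s) - u2 s / y'.toFun (r2 s)|) ∈
          {d : ℝ | ∃ r₁ u₁ r₂ u₂ : ℝ → ℝ, IsParamRep q r₁ u₁ ∧ IsParamRep q' r₂ u₂ ∧
          d = ⨆ s : Set.Icc (0:ℝ) 1, max |r₁ s - r₂ s| |u₁ s - u₂ s|} :=
        ⟨r1, _, r2, _, hQr1, hQr2, rfl⟩
      have hle : dM1 q q' ≤ _ := csInf_le (dM1_bddBelow q q') hmem
      have hsup : (⨆ s : Set.Icc (0:ℝ) 1,
          max |r1 s - r2 s| |u1 s / y.toFun (r1 s) - u2 s / y'.toFun (r2 s)|) ≤ ε / 2 :=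
        ciSup_le hkey
      linarith
end

section
/- Let f : D([0,1],ℝ) × C_m([0,1],ℝ) → D([0,1],ℝ) × C_m([0,1],ℝ) be defined by f(x,y) = (x, ŷ(1)), where ŷ(1) denotes the constant function t ↦ y(1), and C_m([0,1],ℝ) is the set of continuous monotone functions y on [0,1] with y(0) ≥ 0. Then f is continuous with respect to the weak M₁ topology (product topology induced by d_p) on both sides. -/
open Set Filter

/-- Membership in `C_m([0,1],ℝ)`: continuous, monotone, nonnegative at `0`. -/
def InCm (y : Cadlag) : Prop :=
  ContinuousOn y.toFun (Set.Icc 0 1) ∧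
    (MonotoneOn y.toFun (Set.Icc 0 1) ∨ AntitoneOn y.toFun (Set.Icc 0 1)) ∧
    0 ≤ y.toFun 0

/-- The constant càdlàg function `t ↦ a`. -/
noncomputable def constCadlag (a : ℝ) : Cadlag :=
  ⟨fun _ => a, fun _ _ => continuousWithinAt_const, fun _ _ => ⟨a, tendsto_const_nhds⟩⟩


lemma llim_eq_of_cont (x : Cadlag) (hc : ContinuousOn x.toFun (Set.Icc 0 1))
    {t : ℝ} (ht : t ∈ Set.Icc (0:ℝ) 1) : x.llim t = x.toFun t := by
  rcases eq_or_ne t 0 with h0 | h0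
  · simp [Cadlag.llim, h0]
  · have htpos : 0 < t := lt_of_le_of_ne ht.1 (Ne.symm h0)
    have htt : Tendsto x.toFun (nhdsWithin t (Set.Iio t)) (nhds (x.toFun t)) := by
      have := (hc t ht).mono (Set.Ioo_subset_Icc_self.trans
        (Set.Icc_subset_Icc le_rfl ht.2) : Set.Ioo (0:ℝ) t ⊆ Set.Icc 0 1)
      rwa [ContinuousWithinAt, nhdsWithin_Ioo_eq_nhdsLT htpos] at this
    simp only [Cadlag.llim, if_neg h0]
    exact leftLim_eq_of_tendsto htt

lemma graph_of_cont_s12 (x : Cadlag) (hc : ContinuousOn x.toFun (Set.Icc 0 1)) :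
    x.graph = {p : ℝ × ℝ | p.1 ∈ Set.Icc (0:ℝ) 1 ∧ p.2 = x.toFun p.1} := by
  ext ⟨a, b⟩
  simp only [Cadlag.graph, Set.mem_setOf_eq]
  constructor
  · rintro ⟨ha, hb⟩
    rw [llim_eq_of_cont x hc ha, segment_same] at hb
    exact ⟨ha, hb⟩
  · rintro ⟨ha, hb⟩
    rw [llim_eq_of_cont x hc ha, segment_same]
    exact ⟨ha, hb⟩

lemma paramRep_id (x : Cadlag) (hc : ContinuousOn x.toFun (Set.Icc 0 1)) :
    IsParamRep x id x.toFun := by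
  refine ⟨continuousOn_id, hc, fun a _ b _ h => h, ?_⟩
  rw [graph_of_cont_s12 x hc]
  ext ⟨a, b⟩
  constructor
  · rintro ⟨s, hs, h⟩
    simp only [Prod.mk.injEq, id_eq] at h
    exact ⟨h.1 ▸ hs, by rw [← h.1, h.2]⟩
  · rintro ⟨ha, hb⟩
    exact ⟨a, ha, by simp [← hb]⟩

lemma endpoint_eq (x : Cadlag) (hc : ContinuousOn x.toFun (Set.Icc 0 1))
    {r u : ℝ → ℝ} (h : IsParamRep x r u) : u 1 = x.toFun 1 := by
  obtain ⟨_, _, hmono, himg⟩ := h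
  have h1 : (1:ℝ) ∈ Set.Icc (0:ℝ) 1 := by norm_num
  have hmem : (r 1, u 1) ∈ x.graph := by
    rw [← himg]; exact ⟨1, h1, rfl⟩
  have hpt : ((1:ℝ), x.toFun 1) ∈ x.graph := ⟨h1, right_mem_segment ℝ _ _⟩
  rw [← himg] at hpt
  obtain ⟨s, hs, hse⟩ := hpt
  simp only [Prod.mk.injEq] at hse
  have hrs : r s ≤ r 1 := hmono hs h1 hs.2
  have hr1 : r 1 = 1 := le_antisymm hmem.1.2 (hse.1 ▸ hrs)
  rw [graph_of_cont_s12 x hc] at hmem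
  have := hmem.2
  rwa [hr1] at this

lemma abs_sub_endpoint_le (y y' : Cadlag) (hy : ContinuousOn y.toFun (Set.Icc 0 1))
    (hy' : ContinuousOn y'.toFun (Set.Icc 0 1)) :
    |y.toFun 1 - y'.toFun 1| ≤ dM1 y y' := by
  apply le_csInf
  · exact ⟨_, id, y.toFun, id, y'.toFun, paramRep_id y hy, paramRep_id y' hy', rfl⟩
  · rintro d ⟨r₁, u₁, r₂, u₂, h₁, h₂, rfl⟩
    have hF : Continuous fun s : Set.Icc (0:ℝ) 1 => max |r₁ s - r₂ s| |u₁ s - u₂ s| :=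
      (((h₁.1.restrict.sub h₂.1.restrict).abs).max
        ((h₁.2.1.restrict.sub h₂.2.1.restrict).abs))
    have hbdd : BddAbove (Set.range fun s : Set.Icc (0:ℝ) 1 =>
        max |r₁ s - r₂ s| |u₁ s - u₂ s|) := (isCompact_range hF).bddAbove
    have h1 : ((1:ℝ)) ∈ Set.Icc (0:ℝ) 1 := by norm_num
    have hle := le_ciSup hbdd (⟨1, h1⟩ : Set.Icc (0:ℝ) 1)
    have e1 : u₁ 1 = y.toFun 1 := endpoint_eq y hy h₁
    have e2 : u₂ 1 = y'.toFun 1 := endpoint_eq y' hy' h₂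
    calc |y.toFun 1 - y'.toFun 1| = |u₁ 1 - u₂ 1| := by rw [e1, e2]
      _ ≤ max |r₁ 1 - r₂ 1| |u₁ 1 - u₂ 1| := le_max_right _ _
      _ ≤ _ := hle

lemma dM1_const_le (a b : ℝ) : dM1 (constCadlag a) (constCadlag b) ≤ |a - b| := by
  haveI : Nonempty (Set.Icc (0:ℝ) 1) := ⟨⟨0, by norm_num⟩⟩
  apply csInf_le
  · refine ⟨0, ?_⟩
    rintro d ⟨r₁, u₁, r₂, u₂, _, _, rfl⟩
    exact Real.iSup_nonneg fun s => le_max_of_le_left (abs_nonneg _)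
  · refine ⟨id, fun _ => a, id, fun _ => b,
      paramRep_id (constCadlag a) continuousOn_const,
      paramRep_id (constCadlag b) continuousOn_const, ?_⟩
    simp [ciSup_const, max_eq_right (abs_nonneg (a - b))]

/-- Lemma 2.2: the map `f(x,y) = (x, ŷ(1))`, where `ŷ(1)` is the
constant path with value `y(1)`, is continuous from `D([0,1],ℝ) × C_m([0,1],ℝ)` to
`D([0,1],ℝ) × C_m([0,1],ℝ)` with the weak `M₁` (product) topology on both sides. -/
theorem stmt12 (x y : Cadlag) (hy : InCm y) :
    ∀ ε > (0:ℝ), ∃ δ > (0:ℝ), ∀ x' y' : Cadlag, InCm y' →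
      max (dM1 x x') (dM1 y y') < δ →
      max (dM1 x x') (dM1 (constCadlag (y.toFun 1)) (constCadlag (y'.toFun 1))) < ε := by
  intro ε hε
  refine ⟨ε, hε, fun x' y' hy' hlt => ?_⟩
  have hx := lt_of_le_of_lt (le_max_left _ _) hlt
  have hyy := lt_of_le_of_lt (le_max_right _ _) hlt
  have key : dM1 (constCadlag (y.toFun 1)) (constCadlag (y'.toFun 1)) < ε :=
    lt_of_le_of_lt ((dM1_const_le _ _).trans (abs_sub_endpoint_le y y' hy.1 hy'.1)) hyy
  exact max_lt hx key
end
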